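/- If φ satisfies dφ/ds = φ(1-φ^{-n})^{1/2} with n = 4, then for all s > 0, 2·(d/ds)((dφ/ds)^{-1})·(d²φ/ds²) + 2·(dφ/ds)²·(d/ds)((φ·dφ/ds)^{-1}) = -(1-φ^{-4})^{-1}(6 + 2φ^{-8}), which is negative whenever φ > 1. -/

import Mathlib

/-- If `φ` satisfies `dφ/ds = φ(1-φ^{-4})^{1/2}` (the `n = 4` case) with `φ > 1`, then
for all `s > 0`,
`2 (d/ds)((dφ/ds)⁻¹) (d²φ/ds²) + 2 (dφ/ds)² (d/ds)((φ dφ/ds)⁻¹)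
  = -(1-φ^{-4})⁻¹ (6 + 2 φ^{-8})`,
which is negative whenever `φ > 1`. -/
theorem stmt1 (φ : ℝ → ℝ)
    (hφ : ∀ s > (0 : ℝ), 1 < φ s)
    (hode : ∀ s > (0 : ℝ),
      HasDerivAt φ (φ s * Real.sqrt (1 - (φ s) ^ (-4 : ℤ))) s) :
    ∀ s > (0 : ℝ),
      (2 * deriv (fun τ => (deriv φ τ)⁻¹) s * deriv (deriv φ) s
          + 2 * (deriv φ s) ^ 2 * deriv (fun τ => (φ τ * deriv φ τ)⁻¹) s
        = -(1 - (φ s) ^ (-4 : ℤ))⁻¹ * (6 + 2 * (φ s) ^ (-8 : ℤ))) ∧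
      (2 * deriv (fun τ => (deriv φ τ)⁻¹) s * deriv (deriv φ) s
          + 2 * (deriv φ s) ^ 2 * deriv (fun τ => (φ τ * deriv φ τ)⁻¹) s < 0) := by
  intro s hs
  set g : ℝ → ℝ := fun y => y * Real.sqrt (1 - y ^ (-4 : ℤ)) with hgdef
  have hx : 1 < φ s := hφ s hs
  have hx0 : (0:ℝ) < φ s := by linarith
  have hxne : φ s ≠ 0 := ne_of_gt hx0
  -- u > 0
  have hu : (0:ℝ) < 1 - (φ s) ^ (-4 : ℤ) := by
    have h1 : (φ s) ^ (-4:ℤ) < 1 := by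
      rw [zpow_neg]
      rw [inv_lt_one_iff₀]
      right
      exact one_lt_zpow₀ hx (by norm_num)
    linarith
  set u := 1 - (φ s) ^ (-4 : ℤ) with hudef
  set r := Real.sqrt u with hrdef
  have hr : 0 < r := Real.sqrt_pos.mpr hu
  have hr2 : r ^ 2 = u := Real.sq_sqrt hu.le
  have hrne : r ≠ 0 := ne_of_gt hr
  -- derivative of φ
  have hφ' : HasDerivAt φ (φ s * r) s := hode s hs
  -- derivative of g at x = φ s
  have hinner : HasDerivAt (fun y : ℝ => 1 - y ^ (-4 : ℤ)) (-((-4 : ℤ) * (φ s) ^ (-5 : ℤ))) (φ s) :=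
    (hasDerivAt_zpow (-4) (φ s) (Or.inl hxne)).const_sub 1
  have hune : u ≠ 0 := ne_of_gt hu
  have hsqrt : HasDerivAt (fun y : ℝ => Real.sqrt (1 - y ^ (-4 : ℤ)))
      (1 / (2 * r) * -((-4 : ℤ) * (φ s) ^ (-5 : ℤ))) (φ s) := by
    have := (Real.hasDerivAt_sqrt hune).comp (φ s) hinner
    rw [← hrdef] at this
    simpa [mul_comm, Function.comp_def] using this
  have hg : HasDerivAt g
      (1 * Real.sqrt (1 - (φ s) ^ (-4 : ℤ)) + φ s * (1 / (2 * r) * -((-4 : ℤ) * (φ s) ^ (-5 : ℤ)))) (φ s) :=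
    (hasDerivAt_id (φ s)).mul hsqrt
  set G : ℝ := 1 * r + φ s * (1 / (2 * r) * -((-4 : ℤ) * (φ s) ^ (-5 : ℤ))) with hGdef
  have hg' : HasDerivAt g G (φ s) := hg
  -- deriv φ agrees with g ∘ φ near s
  have hev : deriv φ =ᶠ[nhds s] fun τ => g (φ τ) := by
    filter_upwards [Ioi_mem_nhds hs] with τ hτ
    exact (hode τ hτ).deriv
  have hgφ : HasDerivAt (fun τ => g (φ τ)) (G * (φ s * r)) s := hg'.comp s hφ'
  have hd1 : deriv φ s = φ s * r := hφ'.deriv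
  have hd2 : deriv (deriv φ) s = G * (φ s * r) := by
    rw [Filter.EventuallyEq.deriv_eq hev]
    exact hgφ.deriv
  -- deriv of (deriv φ)⁻¹
  have hgφs : g (φ s) = φ s * r := rfl
  have hgne : g (φ s) ≠ 0 := by rw [hgφs]; positivity
  have hev2 : (fun τ => (deriv φ τ)⁻¹) =ᶠ[nhds s] fun τ => (g (φ τ))⁻¹ := by
    filter_upwards [Ioi_mem_nhds hs] with τ hτ
    rw [(hode τ hτ).deriv]
  have hd3 : deriv (fun τ => (deriv φ τ)⁻¹) s = -(G * (φ s * r)) / (φ s * r) ^ 2 := by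
    rw [Filter.EventuallyEq.deriv_eq hev2]
    exact (hgφ.inv hgne).deriv
  -- deriv of (φ * deriv φ)⁻¹
  have hprod : HasDerivAt (fun τ => φ τ * g (φ τ))
      (φ s * r * g (φ s) + φ s * (G * (φ s * r))) s := hφ'.mul hgφ
  have hpne : φ s * g (φ s) ≠ 0 := mul_ne_zero hxne hgne
  have hev3 : (fun τ => (φ τ * deriv φ τ)⁻¹) =ᶠ[nhds s] fun τ => (φ τ * g (φ τ))⁻¹ := by
    filter_upwards [Ioi_mem_nhds hs] with τ hτ
    rw [(hode τ hτ).deriv]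
  have hd4 : deriv (fun τ => (φ τ * deriv φ τ)⁻¹) s
      = -(φ s * r * (φ s * r) + φ s * (G * (φ s * r))) / (φ s * (φ s * r)) ^ 2 := by
    rw [Filter.EventuallyEq.deriv_eq hev3]
    exact (hprod.inv hpne).deriv
  -- now pure algebra
  rw [hd1, hd2, hd3, hd4]
  have hz4 : (φ s) ^ (-4 : ℤ) = ((φ s) ^ 4)⁻¹ := by
    rw [zpow_neg]; norm_cast
  have hz5 : (φ s) ^ (-5 : ℤ) = ((φ s) ^ 5)⁻¹ := by
    rw [zpow_neg]; norm_cast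
  have hz8 : (φ s) ^ (-8 : ℤ) = ((φ s) ^ 8)⁻¹ := by
    rw [zpow_neg]; norm_cast
  have hrel : r ^ 2 * (φ s) ^ 4 = (φ s) ^ 4 - 1 := by
    rw [hr2, hudef, hz4]
    field_simp
  have h41 : (φ s) ^ 4 - 1 ≠ 0 := by nlinarith
  set_option maxHeartbeats 1000000 in
  constructor
  · rw [hGdef, hudef, hz4, hz5, hz8]
    push_cast
    field_simp [h41]
    linear_combination (16 - 12 * (φ s)^4 * r^2 * ((φ s)^4 - 1)) * hrel
  · have heq : 2 * (-(G * (φ s * r)) / (φ s * r) ^ 2) * (G * (φ s * r))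
        + 2 * (φ s * r) ^ 2 * (-(φ s * r * (φ s * r) + φ s * (G * (φ s * r))) / (φ s * (φ s * r)) ^ 2)
        = -u⁻¹ * (6 + 2 * (φ s) ^ (-8 : ℤ)) := by
      rw [hGdef, hudef, hz4, hz5, hz8]
      push_cast
      field_simp [h41]
      linear_combination (16 - 12 * (φ s)^4 * r^2 * ((φ s)^4 - 1)) * hrel
    rw [heq]
    have h1 : (0:ℝ) < 6 + 2 * (φ s) ^ (-8 : ℤ) := by positivity
    have h2 : (0:ℝ) < u⁻¹ := by positivity
    nlinarith
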